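/- Let (A, C, B) be a recollement of abelian categories, let A be an object of A, and let 0 → i_*(A) → M → N → 0 be a short exact sequence in C. If the counit ε_N : j_! j^*(N) → N is a monomorphism, then applying i^* yields a short exact sequence 0 → i^* i_*(A) → i^*(M) → i^*(N) → 0 in A. -/

import Mathlib

open CategoryTheory CategoryTheory.Limits

universe v₁ v₂ v₃ u₁ u₂ u₃

/-- A recollement of abelian categories `(𝒜, 𝒞, ℬ)`, consisting of additive functors
`i_* : 𝒜 ⥤ 𝒞`, `i^*, i^! : 𝒞 ⥤ 𝒜`, `j^* : 𝒞 ⥤ ℬ`, `j_!, j_* : ℬ ⥤ 𝒞` with adjoint pairs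
`(i^*, i_*)`, `(i_*, i^!)`, `(j_!, j^*)`, `(j^*, j_*)`, with `i_*`, `j_!`, `j_*` fully faithful
and the essential image of `i_*` equal to the kernel of `j^*`. -/
structure Recollement (𝒜 : Type u₁) (𝒞 : Type u₂) (ℬ : Type u₃)
    [Category.{v₁} 𝒜] [Category.{v₂} 𝒞] [Category.{v₃} ℬ]
    [Abelian 𝒜] [Abelian 𝒞] [Abelian ℬ] where
  /-- the functor `i^* : 𝒞 ⥤ 𝒜` -/
  iStar : 𝒞 ⥤ 𝒜
  /-- the functor `i_* : 𝒜 ⥤ 𝒞` -/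
  iIns : 𝒜 ⥤ 𝒞
  /-- the functor `i^! : 𝒞 ⥤ 𝒜` -/
  iShriek : 𝒞 ⥤ 𝒜
  /-- the functor `j_! : ℬ ⥤ 𝒞` -/
  jShriek : ℬ ⥤ 𝒞
  /-- the functor `j^* : 𝒞 ⥤ ℬ` -/
  jStar : 𝒞 ⥤ ℬ
  /-- the functor `j_* : ℬ ⥤ 𝒞` -/
  jIns : ℬ ⥤ 𝒞
  iStar_additive : iStar.Additive
  iIns_additive : iIns.Additive
  iShriek_additive : iShriek.Additive
  jShriek_additive : jShriek.Additive
  jStar_additive : jStar.Additive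
  jIns_additive : jIns.Additive
  /-- the adjunction `i^* ⊣ i_*` -/
  adj₁ : iStar ⊣ iIns
  /-- the adjunction `i_* ⊣ i^!` -/
  adj₂ : iIns ⊣ iShriek
  /-- the adjunction `j_! ⊣ j^*` -/
  adj₃ : jShriek ⊣ jStar
  /-- the adjunction `j^* ⊣ j_*` -/
  adj₄ : jStar ⊣ jIns
  iIns_full : iIns.Full
  iIns_faithful : iIns.Faithful
  jShriek_full : jShriek.Full
  jShriek_faithful : jShriek.Faithful
  jIns_full : jIns.Full
  jIns_faithful : jIns.Faithful
  /-- `im i_* = ker j^*` -/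
  im_eq_ker : ∀ X : 𝒞, IsZero (jStar.obj X) ↔ ∃ A₀ : 𝒜, Nonempty (iIns.obj A₀ ≅ X)

variable {𝒜 : Type u₁} {𝒞 : Type u₂} {ℬ : Type u₃}
  [Category.{v₁} 𝒜] [Category.{v₂} 𝒞] [Category.{v₃} ℬ]
  [Abelian 𝒜] [Abelian 𝒞] [Abelian ℬ]

/-- `0 ⟶ X ⟶ Y ⟶ Z ⟶ 0` is a short exact sequence. -/
def IsSES {𝒟 : Type*} [Category 𝒟] [Abelian 𝒟] {X Y Z : 𝒟}
    (f : X ⟶ Y) (g : Y ⟶ Z) : Prop :=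
  ∃ w : f ≫ g = 0, (ShortComplex.mk f g w).ShortExact


open CategoryTheory.Abelian CategoryTheory.Abelian.Pseudoelement

attribute [local instance] CategoryTheory.Abelian.Pseudoelement.objectToSort
attribute [local instance] CategoryTheory.Abelian.Pseudoelement.homToFun

section Aux

/-- For a fully faithful right adjoint `G` (of `adj : L ⊣ G`), if `π : X ⟶ Q` is an epi,
`Q` is isomorphic to an object in the image of `G`, and `u : Q ⟶ G (L X)` satisfies
`π ≫ u = η_X`, then `u` is an isomorphism. -/
lemma isIso_of_epi_of_unit {C : Type*} {D : Type*} [Category C] [Category D]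
    {L : C ⥤ D} {G : D ⥤ C} [G.Full] [G.Faithful] (adj : L ⊣ G)
    {X Q : C} (π : X ⟶ Q) [Epi π] {Q₀ : D} (e : G.obj Q₀ ≅ Q)
    (u : Q ⟶ G.obj (L.obj X)) (hπu : π ≫ u = adj.unit.app X) : IsIso u := by
  set v : Q₀ ⟶ L.obj X := G.preimage (e.hom ≫ u) with hvdef
  have hv : G.map v = e.hom ≫ u := G.map_preimage _
  set ψ₀ : L.obj X ⟶ Q₀ := (adj.homEquiv X Q₀).symm (π ≫ e.inv) with hψdef
  have hFψ : adj.unit.app X ≫ G.map ψ₀ = π ≫ e.inv := by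
    have h := (adj.homEquiv X Q₀).apply_symm_apply (π ≫ e.inv)
    rw [Adjunction.homEquiv_unit] at h
    exact h
  have claim1 : v ≫ ψ₀ = 𝟙 Q₀ := by
    apply G.map_injective
    have key : π ≫ e.inv ≫ G.map (v ≫ ψ₀) = π ≫ e.inv ≫ G.map (𝟙 Q₀) := by
      rw [G.map_comp, hv, G.map_id, Category.comp_id]
      calc π ≫ e.inv ≫ (e.hom ≫ u) ≫ G.map ψ₀
          = (π ≫ u) ≫ G.map ψ₀ := by simp
        _ = π ≫ e.inv := by rw [hπu]; exact hFψ
    rw [cancel_epi π, cancel_epi e.inv] at key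
    exact key
  have claim2 : ψ₀ ≫ v = 𝟙 (L.obj X) := by
    apply (adj.homEquiv X (L.obj X)).injective
    simp only [Adjunction.homEquiv_unit, G.map_comp, hv, G.map_id, Category.comp_id]
    rw [← Category.assoc, hFψ]
    simp [hπu]
  haveI : IsIso v := ⟨ψ₀, claim1, claim2⟩
  haveI : IsIso (e.hom ≫ u) := by rw [← hv]; infer_instance
  exact IsIso.of_isIso_comp_left e.hom u

variable (R : Recollement 𝒜 𝒞 ℬ)

lemma jStar_iIns_isZero (A : 𝒜) : IsZero (R.jStar.obj (R.iIns.obj A)) :=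
  (R.im_eq_ker _).mpr ⟨A, ⟨Iso.refl _⟩⟩

lemma hom_jShriek_iIns {B : ℬ} {A : 𝒜} (φ : R.jShriek.obj B ⟶ R.iIns.obj A) : φ = 0 :=
  (R.adj₃.homEquiv _ _).injective ((jStar_iIns_isZero R A).eq_of_tgt _ _)

lemma counit_unit_zero (X : 𝒞) :
    R.adj₃.counit.app X ≫ R.adj₁.unit.app X = 0 :=
  hom_jShriek_iIns R _

lemma exact_counit_unit (X : 𝒞) :
    (ShortComplex.mk (R.adj₃.counit.app X) (R.adj₁.unit.app X) (counit_unit_zero R X)).Exact := by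
  haveI := R.iIns_full
  haveI := R.iIns_faithful
  haveI := R.jStar_additive
  haveI : R.jStar.PreservesEpimorphisms := Functor.preservesEpimorphisms_of_adjunction R.adj₄
  have hzQ : IsZero (R.jStar.obj (cokernel (R.adj₃.counit.app X))) := by
    have h1 : Epi (R.jStar.map (R.adj₃.counit.app X)) := by
      haveI : IsSplitEpi (R.jStar.map (R.adj₃.counit.app X)) :=
        IsSplitEpi.mk' ⟨R.adj₃.unit.app (R.jStar.obj X), R.adj₃.right_triangle_components X⟩
      infer_instance
    have h2 : R.jStar.map (cokernel.π (R.adj₃.counit.app X)) = 0 := by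
      have h3 := R.jStar.map_comp (R.adj₃.counit.app X) (cokernel.π (R.adj₃.counit.app X))
      rw [cokernel.condition, R.jStar.map_zero] at h3
      exact zero_of_epi_comp _ h3.symm
    have h4 : Epi (R.jStar.map (cokernel.π (R.adj₃.counit.app X))) := R.jStar.map_epi _
    rw [h2] at h4
    haveI := h4
    exact IsZero.of_epi_zero (R.jStar.obj X) _
  obtain ⟨Q₀, ⟨e⟩⟩ := (R.im_eq_ker _).mp hzQ
  haveI : IsIso (cokernel.desc (R.adj₃.counit.app X) (R.adj₁.unit.app X)
      (counit_unit_zero R X)) :=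
    isIso_of_epi_of_unit R.adj₁ (cokernel.π _) e _ (cokernel.π_desc _ _ _)
  have hex : (ShortComplex.mk (R.adj₃.counit.app X) (cokernel.π (R.adj₃.counit.app X))
      (cokernel.condition _)).Exact :=
    ShortComplex.exact_of_g_is_cokernel _ (cokernelIsCokernel _)
  exact ShortComplex.exact_of_iso
    (S₁ := ShortComplex.mk (R.adj₃.counit.app X) (cokernel.π (R.adj₃.counit.app X))
      (cokernel.condition _))
    (ShortComplex.isoMk (Iso.refl _) (Iso.refl _)
      (asIso (cokernel.desc (R.adj₃.counit.app X) (R.adj₁.unit.app X) (counit_unit_zero R X)))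
      (by simp) (by simp)) hex

end Aux

/-- If `0 → i_*(A) → M → N → 0` is a short exact sequence in `𝒞` and the counit
`ε_N : j_! j^*(N) → N` is a monomorphism, then applying `i^*` yields a short exact
sequence `0 → i^* i_*(A) → i^*(M) → i^*(N) → 0` in `𝒜`. -/
theorem stmt_6 (R : Recollement 𝒜 𝒞 ℬ) (A₀ : 𝒜) {M N : 𝒞}
    (f : R.iIns.obj A₀ ⟶ M) (g : M ⟶ N) (h : IsSES f g)
    (hε : Mono (R.adj₃.counit.app N)) :
    IsSES (R.iStar.map f) (R.iStar.map g) := by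
  obtain ⟨w, hse⟩ := h
  haveI := R.iIns_faithful
  haveI := R.iIns_full
  haveI := R.iStar_additive
  haveI := R.jStar_additive
  haveI := R.jShriek_additive
  haveI := hse.mono_f
  haveI := hse.epi_g
  haveI : R.jStar.PreservesEpimorphisms := Functor.preservesEpimorphisms_of_adjunction R.adj₄
  haveI : R.iStar.PreservesEpimorphisms := Functor.preservesEpimorphisms_of_adjunction R.adj₁
  haveI := R.adj₃.rightAdjoint_preservesLimits
  haveI := R.adj₁.leftAdjoint_preservesColimits
  -- `j^* g` is an isomorphism
  haveI hmono' : Mono (R.jStar.map g) := by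
    apply Preadditive.mono_of_cancel_zero
    intro P t ht
    have hlim := KernelFork.mapIsLimit _ hse.fIsKernel R.jStar
    obtain ⟨l, hl⟩ := KernelFork.IsLimit.lift' hlim t ht
    have hf0 : R.jStar.map f = 0 := (jStar_iIns_isZero R A₀).eq_of_src _ _
    simp only [KernelFork.map_ι, Fork.ι_ofι] at hl
    rw [← hl]
    change l ≫ R.jStar.map f = 0
    rw [hf0]
    exact comp_zero
  haveI : Epi (R.jStar.map g) := R.jStar.map_epi g
  haveI : IsIso (R.jStar.map g) := isIso_of_mono_of_epi _
  haveI : IsIso (R.jShriek.map (R.jStar.map g)) := inferInstance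
  -- key monomorphism via pseudoelements
  have hkey : Mono (f ≫ R.adj₁.unit.app M) := by
    apply Pseudoelement.mono_of_zero_of_map_zero
    intro x hx
    rw [Pseudoelement.comp_apply] at hx
    obtain ⟨y, hy⟩ := Pseudoelement.pseudo_exact_of_exact (exact_counit_unit R M) (f x) hx
    have hnat := R.adj₃.counit.naturality g
    simp only [Functor.comp_map] at hnat
    have hz : (R.adj₃.counit.app N) ((R.jShriek.map (R.jStar.map g)) y) = 0 := by
      rw [← Pseudoelement.comp_apply, hnat, Pseudoelement.comp_apply]
      change g ((R.adj₃.counit.app M) y) = 0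
      rw [hy, ← Pseudoelement.comp_apply, w, Pseudoelement.zero_apply]
    have hy0 : (R.jShriek.map (R.jStar.map g)) y = 0 :=
      Pseudoelement.zero_of_map_zero _ (Pseudoelement.pseudo_injective_of_mono _) _ hz
    have hyy : y = 0 :=
      Pseudoelement.zero_of_map_zero _ (Pseudoelement.pseudo_injective_of_mono _) _ hy0
    have hfx : f x = 0 := by
      rw [← hy, hyy, Pseudoelement.apply_zero]
    exact Pseudoelement.zero_of_map_zero _ (Pseudoelement.pseudo_injective_of_mono _) _ hfx
  -- transfer to `i^* f`
  have hnatu := R.adj₁.unit.naturality f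
  simp only [Functor.id_map, Functor.comp_map] at hnatu
  haveI : IsIso (R.adj₁.unit.app (R.iIns.obj A₀)) :=
    R.adj₁.isIso_unit_app_of_iso (Iso.refl _)
  rw [hnatu] at hkey
  haveI := hkey
  haveI : Mono (R.iIns.map (R.iStar.map f)) := by
    have h6 : R.iIns.map (R.iStar.map f) =
        inv (R.adj₁.unit.app (R.iIns.obj A₀)) ≫
          (R.adj₁.unit.app (R.iIns.obj A₀) ≫ R.iIns.map (R.iStar.map f)) := by
      simp
    rw [h6]
    exact mono_comp _ _
  have hmonoA : Mono (R.iStar.map f) :=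
    R.iIns.mono_of_mono_map (inferInstance : Mono (R.iIns.map (R.iStar.map f)))
  -- cokernel part
  have hw' : R.iStar.map f ≫ R.iStar.map g = 0 := by
    rw [← R.iStar.map_comp, w, R.iStar.map_zero]
  have hcolim : IsColimit (CokernelCofork.ofπ (R.iStar.map g) hw') :=
    CokernelCofork.mapIsColimit _ hse.gIsCokernel R.iStar
  have hexact : (ShortComplex.mk (R.iStar.map f) (R.iStar.map g) hw').Exact :=
    ShortComplex.exact_of_g_is_cokernel _ hcolim
  haveI : Epi (R.iStar.map g) := R.iStar.map_epi g
  exact ⟨hw', { exact := hexact, mono_f := hmonoA, epi_g := inferInstance }⟩
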